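/- arXiv:2209.04616 — 3 statements merged into one kernel-verified Lean document; each statement's English description precedes it below -/
import Mathlib

section
/- Let G be a Borel probability measure on ℝ × ℝ^p with finite second moments, w₀ = (y₀, x₀) ∈ ℝ × ℝ^p, and G_ε = (1 − ε)G + ε δ_{w₀} for ε ∈ [0, 1). Let S ⊆ ℝ be a Borel set with w = G(S × ℝ^p) > 0, and let μ_S ∈ ℝ^p denote the conditional mean of X given {Y ∈ S} under G and Σ_S = Var_G(X | Y ∈ S) the conditional variance matrix. Then the map ε ↦ Var_{G_ε}(X | Y ∈ S) is right-differentiable at ε = 0, with derivative 1{y₀ ∈ S} · (1/w) · [ (x₀ − μ_S)(x₀ − μ_S)ᵀ − Σ_S ]. -/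
open MeasureTheory ProbabilityTheory Matrix

/-- the fixed-slice influence function of the slice variance matrix: under
`ε`-contamination `G_ε = (1−ε)G + ε δ_{(y₀,x₀)}`, the map `ε ↦ Var_{G_ε}(X | Y ∈ S)` is
right-differentiable at `0` with derivative
`1{y₀ ∈ S} (1/w) [(x₀ − μ_S)(x₀ − μ_S)ᵀ − Σ_S]` (entrywise). -/
theorem stmt_17 {p : ℕ} (G : Measure (ℝ × (Fin p → ℝ))) [IsProbabilityMeasure G]
    (hG2y : MemLp (fun z : ℝ × (Fin p → ℝ) => z.1) 2 G)
    (hG2x : ∀ i, MemLp (fun z : ℝ × (Fin p → ℝ) => z.2 i) 2 G)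
    (y₀ : ℝ) (x₀ : Fin p → ℝ)
    (S : Set ℝ) (hS : MeasurableSet S)
    (w : ℝ) (hw : w = (G (Prod.fst ⁻¹' S)).toReal) (hwpos : 0 < w)
    (μS : Fin p → ℝ) (hμS : ∀ i, μS i = ∫ z, z.2 i ∂(G[|Prod.fst ⁻¹' S]))
    (SigS : Matrix (Fin p) (Fin p) ℝ)
    (hSigS : ∀ i j, SigS i j = ∫ z, (z.2 i - μS i) * (z.2 j - μS j) ∂(G[|Prod.fst ⁻¹' S])) :
    ∀ i j, HasDerivWithinAt
      (fun ε : ℝ =>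
        let Gε : Measure (ℝ × (Fin p → ℝ)) :=
          ENNReal.ofReal (1 - ε) • G + ENNReal.ofReal ε • Measure.dirac (y₀, x₀)
        ∫ z, (z.2 i - ∫ z', z'.2 i ∂(Gε[|Prod.fst ⁻¹' S])) *
            (z.2 j - ∫ z', z'.2 j ∂(Gε[|Prod.fst ⁻¹' S])) ∂(Gε[|Prod.fst ⁻¹' S]))
      (S.indicator (fun _ => (1 : ℝ)) y₀ * (1 / w) *
        ((x₀ i - μS i) * (x₀ j - μS j) - SigS i j))
      (Set.Ici 0) 0 := by
  intro i j
  classical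
  set A : Set (ℝ × (Fin p → ℝ)) := Prod.fst ⁻¹' S with hAdef
  have hA : MeasurableSet A := hS.preimage measurable_fst
  set c : ℝ := S.indicator (fun _ => (1 : ℝ)) y₀ with hc
  have hc01 : c = 0 ∨ c = 1 := by
    by_cases hy : y₀ ∈ S
    · right; simp [hc, Set.indicator_of_mem hy]
    · left; simp [hc, Set.indicator_of_notMem hy]
  have hcnn : 0 ≤ c := by rcases hc01 with h | h <;> rw [h] <;> norm_num
  have hw0 : w ≠ 0 := ne_of_gt hwpos
  -- conditional integral formula
  have hcondint : ∀ (μ : Measure (ℝ × (Fin p → ℝ))) (g : (ℝ × (Fin p → ℝ)) → ℝ),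
      ∫ z, g z ∂(μ[|A]) = (μ A).toReal⁻¹ * ∫ z in A, g z ∂μ := by
    intro μ g
    rw [ProbabilityTheory.cond, integral_smul_measure, ENNReal.toReal_inv, smul_eq_mul]
  -- product of two L² functions is integrable
  have hmul2 : ∀ (f g : (ℝ × (Fin p → ℝ)) → ℝ), MemLp f 2 G → MemLp g 2 G →
      Integrable (fun z => f z * g z) G := by
    intro f g hf hg
    have : MemLp (g • f) 1 G := hf.smul hg
    exact memLp_one_iff_integrable.mp
      (by simpa [Pi.smul_apply, smul_eq_mul, mul_comm] using this : MemLp (f * g) 1 G)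
  have hmeas : ∀ k : Fin p, Measurable (fun z : ℝ × (Fin p → ℝ) => z.2 k) :=
    fun k => (measurable_pi_apply k).comp measurable_snd
  have hIntk : ∀ k : Fin p, Integrable (fun z : ℝ × (Fin p → ℝ) => z.2 k) G :=
    fun k => (hG2x k).integrable one_le_two
  have hak : ∀ k : Fin p, ∫ z in A, z.2 k ∂G = w * μS k := by
    intro k
    have h := hμS k
    rw [hcondint, ← hw] at h
    rw [h]
    field_simp
  -- expansion of set integrals of centered products
  have e1 : ∀ mi mj : ℝ, ∫ z in A, (z.2 i - mi) * (z.2 j - mj) ∂G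
      = (∫ z in A, z.2 i * z.2 j ∂G) - mi * (w * μS j) - mj * (w * μS i) + w * (mi * mj) := by
    intro mi mj
    have hfun : (fun z : ℝ × (Fin p → ℝ) => (z.2 i - mi) * (z.2 j - mj))
        = fun z => (z.2 i * z.2 j - mi * z.2 j - mj * z.2 i) + mi * mj := by
      funext z; ring
    have hI5 : IntegrableOn (fun z : ℝ × (Fin p → ℝ) => z.2 i * z.2 j) A G :=
      (hmul2 _ _ (hG2x i) (hG2x j)).integrableOn
    have hI6 : IntegrableOn (fun z : ℝ × (Fin p → ℝ) => mi * z.2 j) A G :=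
      ((hIntk j).const_mul mi).integrableOn
    have hI4 : IntegrableOn (fun z : ℝ × (Fin p → ℝ) => mj * z.2 i) A G :=
      ((hIntk i).const_mul mj).integrableOn
    have hI2 : IntegrableOn (fun _ : ℝ × (Fin p → ℝ) => mi * mj) A G :=
      integrableOn_const (measure_ne_top G A)
    have hI3 : IntegrableOn (fun z : ℝ × (Fin p → ℝ) => z.2 i * z.2 j - mi * z.2 j) A G :=
      hI5.sub hI6
    have hI1 : IntegrableOn
        (fun z : ℝ × (Fin p → ℝ) => z.2 i * z.2 j - mi * z.2 j - mj * z.2 i) A G := hI3.sub hI4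
    rw [hfun, integral_add hI1 hI2, integral_sub hI3 hI4,
      integral_sub hI5 hI6, integral_const_mul, integral_const_mul, setIntegral_const,
      measureReal_def, ← hw, hak i, hak j, smul_eq_mul]
  have hB : ∫ z in A, z.2 i * z.2 j ∂G = w * SigS i j + w * (μS i * μS j) := by
    have h := hSigS i j
    rw [hcondint, ← hw, e1 (μS i) (μS j)] at h
    field_simp at h
    linarith [h]
  have hexpand : ∀ mi mj : ℝ, ∫ z in A, (z.2 i - mi) * (z.2 j - mj) ∂G
      = (w * SigS i j + w * (μS i * μS j)) - mi * (w * μS j) - mj * (w * μS i)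
        + w * (mi * mj) := by
    intro mi mj; rw [e1 mi mj, hB]
  -- the key contaminated conditional integral formula
  have key : ∀ ε : ℝ, 0 ≤ ε → ε < 1 → ∀ g : (ℝ × (Fin p → ℝ)) → ℝ, Measurable g →
      Integrable g G →
      ∫ z, g z ∂((ENNReal.ofReal (1 - ε) • G + ENNReal.ofReal ε • Measure.dirac (y₀, x₀))[|A])
        = ((1 - ε) * ∫ z in A, g z ∂G + ε * (c * g (y₀, x₀))) / ((1 - ε) * w + ε * c) := by
    intro ε hε0 hε1 g hgm hgi
    have h1ε : (0:ℝ) ≤ 1 - ε := by linarith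
    have hdInt : Integrable g ((Measure.dirac (y₀, x₀)).restrict A) := by
      rw [restrict_dirac' hA]
      split_ifs with h
      · refine ⟨hgm.aestronglyMeasurable, ?_⟩
        simp [HasFiniteIntegral, lintegral_dirac]
      · exact integrable_zero_measure
    have hre : ∫ z in A, g z
        ∂(ENNReal.ofReal (1 - ε) • G + ENNReal.ofReal ε • Measure.dirac (y₀, x₀))
        = (1 - ε) * ∫ z in A, g z ∂G + ε * (c * g (y₀, x₀)) := by
      rw [Measure.restrict_add, Measure.restrict_smul, Measure.restrict_smul,
        integral_add_measure (hgi.integrableOn.smul_measure ENNReal.ofReal_ne_top)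
          (hdInt.smul_measure ENNReal.ofReal_ne_top),
        integral_smul_measure, integral_smul_measure, ENNReal.toReal_ofReal h1ε,
        ENNReal.toReal_ofReal hε0, setIntegral_dirac g (y₀, x₀) A]
      by_cases hy : y₀ ∈ S
      · have hmem : (y₀, x₀) ∈ A := hy
        rw [if_pos hmem, hc, Set.indicator_of_mem hy]
        simp [smul_eq_mul]
      · have hmem : (y₀, x₀) ∉ A := hy
        rw [if_neg hmem, hc, Set.indicator_of_notMem hy]
        simp [smul_eq_mul]
    have hνA : ((ENNReal.ofReal (1 - ε) • G + ENNReal.ofReal ε • Measure.dirac (y₀, x₀)) A).toReal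
        = (1 - ε) * w + ε * c := by
      rw [Measure.add_apply, Measure.smul_apply, Measure.smul_apply, smul_eq_mul, smul_eq_mul,
        Measure.dirac_apply' _ hA]
      by_cases hy : y₀ ∈ S
      · have hmem : (y₀, x₀) ∈ A := hy
        rw [Set.indicator_of_mem hmem, hc, Set.indicator_of_mem hy]
        rw [ENNReal.toReal_add (ENNReal.mul_ne_top ENNReal.ofReal_ne_top (measure_ne_top G A))
            (by simp [ENNReal.ofReal_ne_top]),
          ENNReal.toReal_mul, ENNReal.toReal_mul, ENNReal.toReal_ofReal h1ε,
          ENNReal.toReal_ofReal hε0, ← hw]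
        simp
      · have hmem : (y₀, x₀) ∉ A := hy
        rw [Set.indicator_of_notMem hmem, hc, Set.indicator_of_notMem hy]
        rw [mul_zero, add_zero, ENNReal.toReal_mul, ENNReal.toReal_ofReal h1ε, ← hw]
        ring
    rw [hcondint, hre, hνA, inv_mul_eq_div]
  -- the explicit rational function F
  set F : ℝ → ℝ := fun ε =>
    ((1 - ε) * ((w * SigS i j + w * (μS i * μS j))
        - (((1 - ε) * (w * μS i) + ε * (c * x₀ i)) / ((1 - ε) * w + ε * c)) * (w * μS j)
        - (((1 - ε) * (w * μS j) + ε * (c * x₀ j)) / ((1 - ε) * w + ε * c)) * (w * μS i)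
        + w * ((((1 - ε) * (w * μS i) + ε * (c * x₀ i)) / ((1 - ε) * w + ε * c))
            * (((1 - ε) * (w * μS j) + ε * (c * x₀ j)) / ((1 - ε) * w + ε * c))))
      + ε * (c * ((x₀ i - ((1 - ε) * (w * μS i) + ε * (c * x₀ i)) / ((1 - ε) * w + ε * c))
          * (x₀ j - ((1 - ε) * (w * μS j) + ε * (c * x₀ j)) / ((1 - ε) * w + ε * c)))))
      / ((1 - ε) * w + ε * c) with hFdef
  -- derivative of F at 0
  have hdd : HasDerivAt (fun ε : ℝ => (1 - ε) * w + ε * c) (-1 * w + 1 * c) 0 :=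
    (((hasDerivAt_id (0:ℝ)).const_sub 1).mul_const w).add ((hasDerivAt_id (0:ℝ)).mul_const c)
  have hdd0 : (1 - (0:ℝ)) * w + 0 * c ≠ 0 := by simpa using hw0
  have hAi : HasDerivAt (fun ε : ℝ => (1 - ε) * (w * μS i) + ε * (c * x₀ i))
      (-1 * (w * μS i) + 1 * (c * x₀ i)) 0 :=
    (((hasDerivAt_id (0:ℝ)).const_sub 1).mul_const (w * μS i)).add
      ((hasDerivAt_id (0:ℝ)).mul_const (c * x₀ i))
  have hAj : HasDerivAt (fun ε : ℝ => (1 - ε) * (w * μS j) + ε * (c * x₀ j))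
      (-1 * (w * μS j) + 1 * (c * x₀ j)) 0 :=
    (((hasDerivAt_id (0:ℝ)).const_sub 1).mul_const (w * μS j)).add
      ((hasDerivAt_id (0:ℝ)).mul_const (c * x₀ j))
  have hMi := hAi.div hdd hdd0
  have hMj := hAj.div hdd hdd0
  have h1 := (((hasDerivAt_const (0:ℝ) (w * SigS i j + w * (μS i * μS j))).sub
      (hMi.mul_const (w * μS j))).sub (hMj.mul_const (w * μS i))).add
      ((hMi.mul hMj).const_mul w)
  have h2 : HasDerivAt (fun ε : ℝ => 1 - ε) (-1) 0 := by
    simpa using (hasDerivAt_id (0:ℝ)).const_sub 1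
  have h3 := h2.mul h1
  have h4i := hMi.const_sub (x₀ i)
  have h4j := hMj.const_sub (x₀ j)
  have h5 := (h4i.mul h4j).const_mul c
  have h6 : HasDerivAt (fun ε : ℝ => ε) (1:ℝ) 0 := hasDerivAt_id 0
  have h7 := h6.mul h5
  have hFd := (h3.add h7).div hdd hdd0
  have hF2 : HasDerivAt F
      (c * (1 / w) * ((x₀ i - μS i) * (x₀ j - μS j) - SigS i j)) 0 := by
    rw [hFdef]
    refine HasDerivAt.congr_deriv hFd ?_
    simp only [Pi.add_apply, Pi.sub_apply, Pi.mul_apply, Pi.div_apply]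
    field_simp
    ring
  -- the functions agree on [0,1)
  have main : ∀ ε ∈ Set.Ico (0:ℝ) 1,
      (∫ z, (z.2 i - ∫ z', z'.2 i
            ∂((ENNReal.ofReal (1 - ε) • G + ENNReal.ofReal ε • Measure.dirac (y₀, x₀))[|A])) *
          (z.2 j - ∫ z', z'.2 j
            ∂((ENNReal.ofReal (1 - ε) • G + ENNReal.ofReal ε • Measure.dirac (y₀, x₀))[|A]))
        ∂((ENNReal.ofReal (1 - ε) • G + ENNReal.ofReal ε • Measure.dirac (y₀, x₀))[|A]))
      = F ε := by
    rintro ε ⟨hε0, hε1⟩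
    set Mi : ℝ := ∫ z', z'.2 i
        ∂((ENNReal.ofReal (1 - ε) • G + ENNReal.ofReal ε • Measure.dirac (y₀, x₀))[|A]) with hMidef
    set Mj : ℝ := ∫ z', z'.2 j
        ∂((ENNReal.ofReal (1 - ε) • G + ENNReal.ofReal ε • Measure.dirac (y₀, x₀))[|A]) with hMjdef
    have hMi' : Mi = ((1 - ε) * (w * μS i) + ε * (c * x₀ i)) / ((1 - ε) * w + ε * c) := by
      rw [hMidef, key ε hε0 hε1 _ (hmeas i) (hIntk i), hak i]
    have hMj' : Mj = ((1 - ε) * (w * μS j) + ε * (c * x₀ j)) / ((1 - ε) * w + ε * c) := by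
      rw [hMjdef, key ε hε0 hε1 _ (hmeas j) (hIntk j), hak j]
    have hIntProd : Integrable (fun z : ℝ × (Fin p → ℝ) => (z.2 i - Mi) * (z.2 j - Mj)) G := by
      exact hmul2 _ _ ((hG2x i).sub (memLp_const Mi)) ((hG2x j).sub (memLp_const Mj))
    have hmeasProd : Measurable (fun z : ℝ × (Fin p → ℝ) => (z.2 i - Mi) * (z.2 j - Mj)) :=
      ((hmeas i).sub measurable_const).mul ((hmeas j).sub measurable_const)
    rw [key ε hε0 hε1 _ hmeasProd hIntProd, hexpand Mi Mj, hMi', hMj', hFdef]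
  have hmem : Set.Ico (0:ℝ) 1 ∈ nhdsWithin (0:ℝ) (Set.Ici 0) :=
    Ico_mem_nhdsGE_of_mem ⟨le_refl 0, one_pos⟩
  exact HasDerivWithinAt.congr_of_eventuallyEq hF2.hasDerivWithinAt
    (Filter.eventually_of_mem hmem fun ε hε => main ε hε) (main 0 ⟨le_refl 0, one_pos⟩)
end

section
/- Let G be a Borel probability measure on ℝ × ℝ^p with finite second moments, w₀ = (y₀, x₀) ∈ ℝ × ℝ^p, and G_ε = (1 − ε)G + ε δ_{w₀} for ε ∈ [0, 1). Let S ⊆ ℝ be a Borel set with w = G(S × ℝ^p) > 0; let μ_S, μ_{y,S} denote the conditional means of X and Y given {Y ∈ S} under G, assume Σ_S = Var_G(X | Y ∈ S) is invertible, and set b_S = Σ_S⁻¹ Cov_G(X, Y | Y ∈ S). Then the map ε ↦ [Var_{G_ε}(X | Y ∈ S)]⁻¹ Cov_{G_ε}(X, Y | Y ∈ S) is right-differentiable at ε = 0, with derivative 1{y₀ ∈ S} · (1/w) · r₀ · Σ_S⁻¹ (x₀ − μ_S), where r₀ = y₀ − μ_{y,S} − b_Sᵀ(x₀ − μ_S)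 is the within-slice least-squares residual of the contaminant. -/
open MeasureTheory ProbabilityTheory Matrix
open scoped Classical

attribute [local instance] Matrix.linftyOpNormedRing Matrix.linftyOpNormedAlgebra

private lemma hasDerivAt_matrix {p : ℕ} {f : ℝ → Matrix (Fin p) (Fin p) ℝ}
    {f' : Matrix (Fin p) (Fin p) ℝ} {x : ℝ}
    (h : ∀ i j, HasDerivAt (fun t => f t i j) (f' i j) x) : HasDerivAt f f' x := by
  have hrepr : ∀ (M : Matrix (Fin p) (Fin p) ℝ),
      M = ∑ i : Fin p, ∑ j : Fin p, (M i j) • Matrix.single i j (1:ℝ) := by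
    intro M
    conv_lhs => rw [Matrix.matrix_eq_sum_single M]
    refine Finset.sum_congr rfl fun i _ => Finset.sum_congr rfl fun j _ => ?_
    rw [Matrix.smul_single, smul_eq_mul, mul_one]
  have h2 : HasDerivAt (fun t => ∑ i : Fin p, ∑ j : Fin p,
      (f t i j) • Matrix.single i j (1:ℝ))
      (∑ i : Fin p, ∑ j : Fin p, (f' i j) • Matrix.single i j (1:ℝ)) x := by
    refine HasDerivAt.fun_sum fun i _ => HasDerivAt.fun_sum fun j _ => ?_
    exact (h i j).smul_const _
  have : (fun t => ∑ i : Fin p, ∑ j : Fin p, (f t i j) • Matrix.single i j (1:ℝ)) = f := by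
    funext t; exact (hrepr (f t)).symm
  rw [this] at h2
  rwa [← hrepr f'] at h2

private noncomputable def entryCLM {p : ℕ} (i j : Fin p) :
    Matrix (Fin p) (Fin p) ℝ →L[ℝ] ℝ :=
  LinearMap.toContinuousLinearMap
    { toFun := fun M => M i j
      map_add' := fun _ _ => rfl
      map_smul' := fun _ _ => rfl }

private lemma entryCLM_apply {p : ℕ} (i j : Fin p) (M : Matrix (Fin p) (Fin p) ℝ) :
    entryCLM i j M = M i j := rfl

private lemma hasDerivAt_inv_matrix {p : ℕ} {f : ℝ → Matrix (Fin p) (Fin p) ℝ}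
    {f' A : Matrix (Fin p) (Fin p) ℝ} {x : ℝ}
    (hA : f x = A) (hdet : IsUnit A.det)
    (hf : HasDerivAt f f' x) :
    HasDerivAt (fun t => (f t)⁻¹) (-(A⁻¹ * f' * A⁻¹)) x := by
  obtain ⟨u, hu⟩ := ((Matrix.isUnit_iff_isUnit_det A).mpr hdet)
  have hg : HasFDerivAt Ring.inverse
      (-(ContinuousLinearMap.mulLeftRight ℝ (Matrix (Fin p) (Fin p) ℝ) ↑u⁻¹ ↑u⁻¹)) (f x) := by
    rw [hA, ← hu]
    exact hasFDerivAt_ringInverse u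
  have h2 := hg.comp_hasDerivAt x hf
  have h3 : (fun t => Ring.inverse (f t)) = fun t => (f t)⁻¹ := by
    funext t; rw [Matrix.nonsing_inv_eq_ringInverse]
  rw [Function.comp_def, h3] at h2
  refine h2.congr_deriv ?_
  rw [ContinuousLinearMap.neg_apply, ContinuousLinearMap.mulLeftRight_apply]
  rw [Matrix.coe_units_inv, hu]

private lemma vecMulVec_mulVec' {p : ℕ} (d e v : Fin p → ℝ) :
    Matrix.vecMulVec d e *ᵥ v = (e ⬝ᵥ v) • d := by
  funext i
  simp only [Matrix.mulVec, Matrix.vecMulVec_apply, dotProduct, Pi.smul_apply, smul_eq_mul,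
    Finset.sum_mul, Finset.mul_sum]
  exact Finset.sum_congr rfl fun j _ => by ring

private lemma matrix_algebra {p : ℕ} (SigS : Matrix (Fin p) (Fin p) ℝ)
    (hdet : IsUnit SigS.det) (d CovG : Fin p → ℝ) (c e : ℝ) :
    (-(SigS⁻¹ * (Matrix.of fun a b => c * (d a * d b - SigS a b)) * SigS⁻¹)) *ᵥ CovG
      + SigS⁻¹ *ᵥ (fun b => c * (d b * e - CovG b))
    = (c * (e - (SigS⁻¹ *ᵥ CovG) ⬝ᵥ d)) • (SigS⁻¹ *ᵥ d) := by
  have hM : (Matrix.of fun a b => c * (d a * d b - SigS a b))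
      = c • (Matrix.vecMulVec d d - SigS) := by
    ext a b
    simp only [Matrix.of_apply, Matrix.smul_apply, Matrix.sub_apply, Matrix.vecMulVec_apply,
      smul_eq_mul]
  have h2 : (fun b => c * (d b * e - CovG b)) = c • (e • d - CovG) := by
    funext b
    simp only [Pi.smul_apply, Pi.sub_apply, smul_eq_mul]
    ring
  rw [hM, h2]
  rw [Matrix.mul_smul, Matrix.smul_mul, Matrix.neg_mulVec, Matrix.smul_mulVec,
    Matrix.mul_sub, Matrix.sub_mul, Matrix.nonsing_inv_mul _ hdet, Matrix.one_mul,
    Matrix.sub_mulVec, ← Matrix.mulVec_mulVec, ← Matrix.mulVec_mulVec,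
    vecMulVec_mulVec', Matrix.mulVec_smul, Matrix.mulVec_smul, Matrix.mulVec_sub,
    Matrix.mulVec_smul, dotProduct_comm d (SigS⁻¹ *ᵥ CovG)]
  funext a
  simp only [Pi.add_apply, Pi.neg_apply, Pi.smul_apply, Pi.sub_apply, smul_eq_mul]
  ring

private lemma hlin (q r : ℝ) (x : ℝ) :
    HasDerivAt (fun ε : ℝ => (1 - ε) * q + ε * r) (r - q) x := by
  have h1 : HasDerivAt (fun ε : ℝ => 1 - ε) (-1) x := (hasDerivAt_id x).const_sub 1
  have h := (h1.mul_const q).add ((hasDerivAt_id x).mul_const r)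
  refine h.congr_deriv ?_
  ring

private lemma hV_entry (w χ u v s a b : ℝ) (hw : w ≠ 0) :
    HasDerivAt (fun ε : ℝ =>
      ((1 - ε) * (w * (s + u * v)) + ε * (χ * (a * b))) / ((1 - ε) * w + ε * χ)
      - (((1 - ε) * (w * u) + ε * (χ * a)) * ((1 - ε) * (w * v) + ε * (χ * b)))
        / (((1 - ε) * w + ε * χ) * ((1 - ε) * w + ε * χ)))
      (χ / w * ((a - u) * (b - v) - s)) 0 := by
  have hW : HasDerivAt (fun ε : ℝ => (1 - ε) * w + ε * χ) (χ - w) 0 := hlin w χ 0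
  have hP := hlin (w * (s + u * v)) (χ * (a * b)) 0
  have hN1 := hlin (w * u) (χ * a) 0
  have hN2 := hlin (w * v) (χ * b) 0
  have hW0 : ((1:ℝ) - 0) * w + 0 * χ ≠ 0 := by simpa using hw
  have hWW0 : (((1:ℝ) - 0) * w + 0 * χ) * (((1:ℝ) - 0) * w + 0 * χ) ≠ 0 := mul_ne_zero hW0 hW0
  have h := (hP.div hW hW0).sub ((hN1.mul hN2).div (hW.mul hW) hWW0)
  refine h.congr_deriv ?_
  norm_num
  field_simp
  ring

private lemma V_entry_zero (w χ u v s a b : ℝ) (hw : w ≠ 0) :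
    ((1 - (0:ℝ)) * (w * (s + u * v)) + 0 * (χ * (a * b))) / ((1 - (0:ℝ)) * w + 0 * χ)
      - (((1 - (0:ℝ)) * (w * u) + 0 * (χ * a)) * ((1 - (0:ℝ)) * (w * v) + 0 * (χ * b)))
        / (((1 - (0:ℝ)) * w + 0 * χ) * ((1 - (0:ℝ)) * w + 0 * χ)) = s := by
  norm_num
  field_simp
  ring

private lemma deriv_main {p : ℕ} (w χ μyS y₀ : ℝ) (hw : w ≠ 0)
    (μS x₀ CovG : Fin p → ℝ) (SigS : Matrix (Fin p) (Fin p) ℝ)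
    (hdet : IsUnit SigS.det) (i : Fin p) :
    HasDerivAt (fun ε : ℝ =>
      ((Matrix.of fun a b =>
            ((1 - ε) * (w * (SigS a b + μS a * μS b)) + ε * (χ * (x₀ a * x₀ b)))
              / ((1 - ε) * w + ε * χ)
            - (((1 - ε) * (w * μS a) + ε * (χ * x₀ a)) * ((1 - ε) * (w * μS b) + ε * (χ * x₀ b)))
              / (((1 - ε) * w + ε * χ) * ((1 - ε) * w + ε * χ)))⁻¹
        *ᵥ fun b =>
            ((1 - ε) * (w * (CovG b + μS b * μyS)) + ε * (χ * (x₀ b * y₀)))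
              / ((1 - ε) * w + ε * χ)
            - (((1 - ε) * (w * μS b) + ε * (χ * x₀ b)) * ((1 - ε) * (w * μyS) + ε * (χ * y₀)))
              / (((1 - ε) * w + ε * χ) * ((1 - ε) * w + ε * χ))) i)
      (χ * (1 / w) * (y₀ - μyS - (SigS⁻¹ *ᵥ CovG) ⬝ᵥ (x₀ - μS)) * (SigS⁻¹ *ᵥ (x₀ - μS)) i)
      0 := by
  have hVm0 : (Matrix.of fun a b : Fin p =>
      ((1 - (0:ℝ)) * (w * (SigS a b + μS a * μS b)) + 0 * (χ * (x₀ a * x₀ b)))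
        / ((1 - (0:ℝ)) * w + 0 * χ)
      - (((1 - (0:ℝ)) * (w * μS a) + 0 * (χ * x₀ a)) * ((1 - (0:ℝ)) * (w * μS b) + 0 * (χ * x₀ b)))
        / (((1 - (0:ℝ)) * w + 0 * χ) * ((1 - (0:ℝ)) * w + 0 * χ))) = SigS := by
    ext a b
    exact V_entry_zero w χ (μS a) (μS b) (SigS a b) (x₀ a) (x₀ b) hw
  have hVd : HasDerivAt (fun ε : ℝ => Matrix.of fun a b : Fin p =>
      ((1 - ε) * (w * (SigS a b + μS a * μS b)) + ε * (χ * (x₀ a * x₀ b)))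
        / ((1 - ε) * w + ε * χ)
      - (((1 - ε) * (w * μS a) + ε * (χ * x₀ a)) * ((1 - ε) * (w * μS b) + ε * (χ * x₀ b)))
        / (((1 - ε) * w + ε * χ) * ((1 - ε) * w + ε * χ)))
      (Matrix.of fun a b : Fin p => χ / w * ((x₀ - μS) a * (x₀ - μS) b - SigS a b)) 0 := by
    refine hasDerivAt_matrix fun a b => ?_
    exact hV_entry w χ (μS a) (μS b) (SigS a b) (x₀ a) (x₀ b) hw
  have hInv := hasDerivAt_inv_matrix hVm0 hdet hVd
  have hE : ∀ b : Fin p, HasDerivAt (fun ε : ℝ =>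
      (Matrix.of fun a b : Fin p =>
        ((1 - ε) * (w * (SigS a b + μS a * μS b)) + ε * (χ * (x₀ a * x₀ b)))
          / ((1 - ε) * w + ε * χ)
        - (((1 - ε) * (w * μS a) + ε * (χ * x₀ a)) * ((1 - ε) * (w * μS b) + ε * (χ * x₀ b)))
          / (((1 - ε) * w + ε * χ) * ((1 - ε) * w + ε * χ)))⁻¹ i b)
      ((-(SigS⁻¹ * (Matrix.of fun a b : Fin p =>
          χ / w * ((x₀ - μS) a * (x₀ - μS) b - SigS a b)) * SigS⁻¹)) i b) 0 := by
    intro b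
    exact (entryCLM i b).hasFDerivAt.comp_hasDerivAt 0 hInv
  have hCb : ∀ b : Fin p, HasDerivAt (fun ε : ℝ =>
      ((1 - ε) * (w * (CovG b + μS b * μyS)) + ε * (χ * (x₀ b * y₀))) / ((1 - ε) * w + ε * χ)
      - (((1 - ε) * (w * μS b) + ε * (χ * x₀ b)) * ((1 - ε) * (w * μyS) + ε * (χ * y₀)))
        / (((1 - ε) * w + ε * χ) * ((1 - ε) * w + ε * χ)))
      (χ / w * ((x₀ - μS) b * (y₀ - μyS) - CovG b)) 0 := by
    intro b
    exact hV_entry w χ (μS b) μyS (CovG b) (x₀ b) y₀ hw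
  have hsum := HasDerivAt.fun_sum (u := (Finset.univ : Finset (Fin p)))
    (fun b _ => (hE b).mul (hCb b))
  have hfun : (fun ε : ℝ =>
      ((Matrix.of fun a b =>
            ((1 - ε) * (w * (SigS a b + μS a * μS b)) + ε * (χ * (x₀ a * x₀ b)))
              / ((1 - ε) * w + ε * χ)
            - (((1 - ε) * (w * μS a) + ε * (χ * x₀ a)) * ((1 - ε) * (w * μS b) + ε * (χ * x₀ b)))
              / (((1 - ε) * w + ε * χ) * ((1 - ε) * w + ε * χ)))⁻¹
        *ᵥ fun b =>
            ((1 - ε) * (w * (CovG b + μS b * μyS)) + ε * (χ * (x₀ b * y₀)))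
              / ((1 - ε) * w + ε * χ)
            - (((1 - ε) * (w * μS b) + ε * (χ * x₀ b)) * ((1 - ε) * (w * μyS) + ε * (χ * y₀)))
              / (((1 - ε) * w + ε * χ) * ((1 - ε) * w + ε * χ))) i)
      = (fun ε : ℝ => ∑ b : Fin p,
        ((Matrix.of fun a b =>
            ((1 - ε) * (w * (SigS a b + μS a * μS b)) + ε * (χ * (x₀ a * x₀ b)))
              / ((1 - ε) * w + ε * χ)
            - (((1 - ε) * (w * μS a) + ε * (χ * x₀ a)) * ((1 - ε) * (w * μS b) + ε * (χ * x₀ b)))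
              / (((1 - ε) * w + ε * χ) * ((1 - ε) * w + ε * χ)))⁻¹ i b)
          * (((1 - ε) * (w * (CovG b + μS b * μyS)) + ε * (χ * (x₀ b * y₀)))
              / ((1 - ε) * w + ε * χ)
            - (((1 - ε) * (w * μS b) + ε * (χ * x₀ b)) * ((1 - ε) * (w * μyS) + ε * (χ * y₀)))
              / (((1 - ε) * w + ε * χ) * ((1 - ε) * w + ε * χ)))) := by
    funext ε
    simp [Matrix.mulVec, dotProduct]
  rw [hfun]
  refine hsum.congr_deriv ?_
  have hC0 : ∀ b : Fin p,
      ((1 - (0:ℝ)) * (w * (CovG b + μS b * μyS)) + 0 * (χ * (x₀ b * y₀)))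
        / ((1 - (0:ℝ)) * w + 0 * χ)
      - (((1 - (0:ℝ)) * (w * μS b) + 0 * (χ * x₀ b)) * ((1 - (0:ℝ)) * (w * μyS) + 0 * (χ * y₀)))
        / (((1 - (0:ℝ)) * w + 0 * χ) * ((1 - (0:ℝ)) * w + 0 * χ)) = CovG b :=
    fun b => V_entry_zero w χ (μS b) μyS (CovG b) (x₀ b) y₀ hw
  simp only [hVm0, hC0]
  have hsum2 : (∑ b : Fin p,
      ((-(SigS⁻¹ * (Matrix.of fun a b => χ / w * ((x₀ - μS) a * (x₀ - μS) b - SigS a b)) * SigS⁻¹)) i b * CovG b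
      + SigS⁻¹ i b * (χ / w * ((x₀ - μS) b * (y₀ - μyS) - CovG b))))
      = ((-(SigS⁻¹ * (Matrix.of fun a b => χ / w * ((x₀ - μS) a * (x₀ - μS) b - SigS a b)) * SigS⁻¹)) *ᵥ CovG
        + SigS⁻¹ *ᵥ fun b => χ / w * ((x₀ - μS) b * (y₀ - μyS) - CovG b)) i := by
    simp [Matrix.mulVec, dotProduct, Finset.sum_add_distrib]
  rw [hsum2, matrix_algebra SigS hdet (x₀ - μS) CovG (χ/w) (y₀ - μyS)]
  simp only [Pi.smul_apply, smul_eq_mul]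
  ring

private lemma intg_dirac {α : Type*} [MeasurableSpace α] [MeasurableSingletonClass α] (f : α → ℝ)
    (a : α) : Integrable f (Measure.dirac a) := by
  refine (integrable_const (f a)).congr ?_
  rw [Filter.eventuallyEq_iff_exists_mem]
  exact ⟨{a}, by simp [MeasureTheory.ae_dirac_eq], fun x hx => by simp at hx; simp [hx]⟩

private lemma contam_T_toReal {α : Type*} [MeasurableSpace α]
    (G : Measure α) [IsProbabilityMeasure G] {T : Set α} (hT : MeasurableSet T)
    (w₀ : α) {ε : ℝ} (hε0 : 0 ≤ ε) (hε1 : ε < 1) :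
    ((ENNReal.ofReal (1 - ε) • G + ENNReal.ofReal ε • Measure.dirac w₀) T).toReal
      = (1 - ε) * (G T).toReal + ε * (if w₀ ∈ T then 1 else 0) := by
  have h1e : (0:ℝ) ≤ 1 - ε := by linarith
  rw [Measure.add_apply, Measure.smul_apply, Measure.smul_apply, smul_eq_mul, smul_eq_mul,
    Measure.dirac_apply' _ hT, ENNReal.toReal_add, ENNReal.toReal_mul, ENNReal.toReal_mul,
    ENNReal.toReal_ofReal h1e, ENNReal.toReal_ofReal hε0]
  · congr 1
    rw [Set.indicator_apply]
    split <;> simp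
  · exact ENNReal.mul_ne_top ENNReal.ofReal_ne_top (measure_ne_top _ _)
  · refine ENNReal.mul_ne_top ENNReal.ofReal_ne_top ?_
    rw [Set.indicator_apply]; split <;> simp

private lemma contam_T_ne_zero {α : Type*} [MeasurableSpace α]
    (G : Measure α) [IsProbabilityMeasure G] {T : Set α}
    (w₀ : α) {ε : ℝ} (hε1 : ε < 1) (hGT : G T ≠ 0) :
    ((ENNReal.ofReal (1 - ε) • G + ENNReal.ofReal ε • Measure.dirac w₀) T) ≠ 0 := by
  rw [Measure.add_apply, Measure.smul_apply, smul_eq_mul]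
  intro h
  rw [add_eq_zero] at h
  have := h.1
  rw [mul_eq_zero] at this
  rcases this with h' | h'
  · rw [ENNReal.ofReal_eq_zero] at h'; linarith
  · exact hGT h'

private lemma contam_T_ne_top {α : Type*} [MeasurableSpace α]
    (G : Measure α) [IsProbabilityMeasure G] {T : Set α} (hT : MeasurableSet T)
    (w₀ : α) (ε : ℝ) :
    ((ENNReal.ofReal (1 - ε) • G + ENNReal.ofReal ε • Measure.dirac w₀) T) ≠ ⊤ := by
  rw [Measure.add_apply, Measure.smul_apply, Measure.smul_apply, smul_eq_mul, smul_eq_mul]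
  refine ENNReal.add_ne_top.2 ⟨ENNReal.mul_ne_top ENNReal.ofReal_ne_top (measure_ne_top _ _),
    ENNReal.mul_ne_top ENNReal.ofReal_ne_top ?_⟩
  rw [Measure.dirac_apply' _ hT, Set.indicator_apply]
  split <;> simp

private lemma cond_contam_integral {α : Type*} [MeasurableSpace α] [MeasurableSingletonClass α]
    (G : Measure α) [IsProbabilityMeasure G] {T : Set α} (hT : MeasurableSet T)
    (w₀ : α) {ε : ℝ} (hε0 : 0 ≤ ε) (hε1 : ε < 1)
    (f : α → ℝ) (hfi : Integrable f G) :
    ∫ z, f z ∂((ENNReal.ofReal (1 - ε) • G + ENNReal.ofReal ε • Measure.dirac w₀)[|T])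
      = ((1 - ε) * ∫ z in T, f z ∂G + ε * (if w₀ ∈ T then f w₀ else 0))
        / ((1 - ε) * (G T).toReal + ε * (if w₀ ∈ T then 1 else 0)) := by
  have h1e : (0:ℝ) ≤ 1 - ε := by linarith
  have h1 : Integrable f (ENNReal.ofReal (1 - ε) • G.restrict T) :=
    (hfi.restrict).smul_measure ENNReal.ofReal_ne_top
  rw [ProbabilityTheory.cond, integral_smul_measure, Measure.restrict_add,
    Measure.restrict_smul, Measure.restrict_smul, MeasureTheory.restrict_dirac' hT,
    ENNReal.toReal_inv, contam_T_toReal G hT w₀ hε0 hε1]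
  by_cases hm : w₀ ∈ T
  · rw [if_pos hm, if_pos hm, if_pos hm]
    have h2 : Integrable f (ENNReal.ofReal ε • Measure.dirac w₀) :=
      (intg_dirac f w₀).smul_measure ENNReal.ofReal_ne_top
    rw [integral_add_measure h1 h2, integral_smul_measure, integral_smul_measure, integral_dirac,
      ENNReal.toReal_ofReal h1e, ENNReal.toReal_ofReal hε0, smul_eq_mul, smul_eq_mul, smul_eq_mul]
    rw [div_eq_inv_mul]
  · rw [if_neg hm, if_neg hm, if_neg hm, smul_zero, add_zero, integral_smul_measure,
      ENNReal.toReal_ofReal h1e, smul_eq_mul, smul_eq_mul]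
    rw [div_eq_inv_mul]
    ring

example : MeasurableSingletonClass (ℝ × (Fin 3 → ℝ)) := inferInstance

private lemma memL2_mul {α : Type*} [MeasurableSpace α] {μ : Measure α} {f g : α → ℝ}
    (hf : MemLp f 2 μ) (hg : MemLp g 2 μ) : Integrable (fun x => f x * g x) μ := by
  have h := (((hf.add hg).integrable_sq.sub hf.integrable_sq).sub hg.integrable_sq).const_mul (2⁻¹ : ℝ)
  refine h.congr (Filter.Eventually.of_forall fun x => ?_)
  simp only [Pi.sub_apply, Pi.add_apply]
  ring

private lemma cov_expand {α : Type*} [MeasurableSpace α] (Q : Measure α) [IsProbabilityMeasure Q]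
    {f g : α → ℝ} (hf : Integrable f Q) (hg : Integrable g Q)
    (hfg : Integrable (fun x => f x * g x) Q) :
    ∫ x, (f x - ∫ y, f y ∂Q) * (g x - ∫ y, g y ∂Q) ∂Q
      = (∫ x, f x * g x ∂Q) - (∫ x, f x ∂Q) * (∫ x, g x ∂Q) := by
  set a := ∫ y, f y ∂Q with ha
  set b := ∫ y, g y ∂Q with hb
  have h1 : ∀ x, (f x - a) * (g x - b) = (f x * g x - a * g x) - (b * f x - a * b) := by
    intro x; ring
  have h2 : Integrable (fun x => f x * g x - a * g x) Q := hfg.sub (hg.const_mul a)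
  have h3 : Integrable (fun x => b * f x - a * b) Q := (hf.const_mul b).sub (integrable_const _)
  rw [integral_congr_ae (Filter.Eventually.of_forall h1), integral_sub h2 h3,
    integral_sub hfg (hg.const_mul a), integral_sub (hf.const_mul b) (integrable_const _),
    integral_const_mul, integral_const_mul, integral_const]
  simp only [measure_univ, ENNReal.toReal_one, probReal_univ, one_smul, ← ha, ← hb]
  ring



/-- the fixed-slice influence function of the slice OLS slope: under
`ε`-contamination `G_ε = (1−ε)G + ε δ_{(y₀,x₀)}`, the map
`ε ↦ [Var_{G_ε}(X | Y ∈ S)]⁻¹ Cov_{G_ε}(X, Y | Y ∈ S)` is right-differentiable at `0`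
with derivative `1{y₀ ∈ S} (1/w) r₀ Σ_S⁻¹ (x₀ − μ_S)`, where
`r₀ = y₀ − μ_{y,S} − b_Sᵀ(x₀ − μ_S)`. -/
theorem stmt_18 {p : ℕ} (G : Measure (ℝ × (Fin p → ℝ))) [IsProbabilityMeasure G]
    (hG2y : MemLp (fun z : ℝ × (Fin p → ℝ) => z.1) 2 G)
    (hG2x : ∀ i, MemLp (fun z : ℝ × (Fin p → ℝ) => z.2 i) 2 G)
    (y₀ : ℝ) (x₀ : Fin p → ℝ)
    (S : Set ℝ) (hS : MeasurableSet S)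
    (w : ℝ) (hw : w = (G (Prod.fst ⁻¹' S)).toReal) (hwpos : 0 < w)
    (μS : Fin p → ℝ) (hμS : ∀ i, μS i = ∫ z, z.2 i ∂(G[|Prod.fst ⁻¹' S]))
    (μyS : ℝ) (hμyS : μyS = ∫ z, z.1 ∂(G[|Prod.fst ⁻¹' S]))
    (SigS : Matrix (Fin p) (Fin p) ℝ)
    (hSigS : ∀ i j, SigS i j = ∫ z, (z.2 i - μS i) * (z.2 j - μS j) ∂(G[|Prod.fst ⁻¹' S]))
    (hSigSinv : IsUnit SigS.det)
    (CovG : Fin p → ℝ)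
    (hCovG : ∀ i, CovG i = ∫ z, (z.2 i - μS i) * (z.1 - μyS) ∂(G[|Prod.fst ⁻¹' S]))
    (bS : Fin p → ℝ) (hbS : bS = SigS⁻¹ *ᵥ CovG)
    (r₀ : ℝ) (hr₀ : r₀ = y₀ - μyS - bS ⬝ᵥ (x₀ - μS)) :
    ∀ i, HasDerivWithinAt
      (fun ε : ℝ =>
        let Gε : Measure (ℝ × (Fin p → ℝ)) :=
          ENNReal.ofReal (1 - ε) • G + ENNReal.ofReal ε • Measure.dirac (y₀, x₀)
        let Qε := Gε[|Prod.fst ⁻¹' S]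
        let mX : Fin p → ℝ := fun i => ∫ z, z.2 i ∂Qε
        let mY : ℝ := ∫ z, z.1 ∂Qε
        let V : Matrix (Fin p) (Fin p) ℝ :=
          Matrix.of fun i j => ∫ z, (z.2 i - mX i) * (z.2 j - mX j) ∂Qε
        let C : Fin p → ℝ := fun i => ∫ z, (z.2 i - mX i) * (z.1 - mY) ∂Qε
        (V⁻¹ *ᵥ C) i)
      (S.indicator (fun _ => (1 : ℝ)) y₀ * (1 / w) * r₀ * (SigS⁻¹ *ᵥ (x₀ - μS)) i)
      (Set.Ici 0) 0 := by
  intro i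
  have hwne : w ≠ 0 := ne_of_gt hwpos
  have hGT0 : G (Prod.fst ⁻¹' S) ≠ 0 := by
    intro h
    rw [h] at hw
    simp at hw
    exact hwne hw
  have hTm : MeasurableSet (Prod.fst ⁻¹' S : Set (ℝ × (Fin p → ℝ))) :=
    hS.preimage measurable_fst
  set χ : ℝ := if y₀ ∈ S then 1 else 0 with hχ
  -- integrability under G
  have hIx : ∀ j, Integrable (fun z : ℝ × (Fin p → ℝ) => z.2 j) G :=
    fun j => (hG2x j).integrable one_le_two
  have hIy : Integrable (fun z : ℝ × (Fin p → ℝ) => z.1) G := hG2y.integrable one_le_two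
  have hIxx : ∀ a b, Integrable (fun z : ℝ × (Fin p → ℝ) => z.2 a * z.2 b) G :=
    fun a b => memL2_mul (hG2x a) (hG2x b)
  have hIxy : ∀ a, Integrable (fun z : ℝ × (Fin p → ℝ) => z.2 a * z.1) G :=
    fun a => memL2_mul (hG2x a) hG2y
  -- integrability under G[|T]
  haveI hQ0P : IsProbabilityMeasure (G[|Prod.fst ⁻¹' S]) :=
    cond_isProbabilityMeasure hGT0
  have hci0 : ∀ {f : ℝ × (Fin p → ℝ) → ℝ}, Integrable f G →
      Integrable f (G[|Prod.fst ⁻¹' S]) := by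
    intro f hf
    rw [ProbabilityTheory.cond]
    exact (hf.restrict).smul_measure (ENNReal.inv_ne_top.2 hGT0)
  -- set-integral to conditional-integral relation
  have hintT : ∀ f : ℝ × (Fin p → ℝ) → ℝ,
      (∫ z in Prod.fst ⁻¹' S, f z ∂G) = w * ∫ z, f z ∂(G[|Prod.fst ⁻¹' S]) := by
    intro f
    rw [ProbabilityTheory.cond, integral_smul_measure, ENNReal.toReal_inv, smul_eq_mul,
      ← hw, mul_inv_cancel_left₀ hwne]
  -- first moments
  have hmomX : ∀ a, ∫ z in Prod.fst ⁻¹' S, z.2 a ∂G = w * μS a := by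
    intro a; rw [hintT, ← hμS a]
  have hmomY : ∫ z in Prod.fst ⁻¹' S, z.1 ∂G = w * μyS := by
    rw [hintT, ← hμyS]
  -- second moments
  have hQ0XX : ∀ a b, (∫ z, z.2 a * z.2 b ∂(G[|Prod.fst ⁻¹' S]))
      = SigS a b + μS a * μS b := by
    intro a b
    have h := cov_expand (G[|Prod.fst ⁻¹' S]) (hci0 (hIx a)) (hci0 (hIx b)) (hci0 (hIxx a b))
    simp only [] at h
    rw [← hμS a, ← hμS b] at h
    rw [hSigS a b, h]
    ring
  have hQ0XY : ∀ a, (∫ z, z.2 a * z.1 ∂(G[|Prod.fst ⁻¹' S]))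
      = CovG a + μS a * μyS := by
    intro a
    have h := cov_expand (G[|Prod.fst ⁻¹' S]) (hci0 (hIx a)) (hci0 hIy) (hci0 (hIxy a))
    simp only [] at h
    rw [← hμS a, ← hμyS] at h
    rw [hCovG a, h]
    ring
  have hmomXX : ∀ a b, ∫ z in Prod.fst ⁻¹' S, z.2 a * z.2 b ∂G
      = w * (SigS a b + μS a * μS b) := by
    intro a b; rw [hintT, hQ0XX a b]
  have hmomXY : ∀ a, ∫ z in Prod.fst ⁻¹' S, z.2 a * z.1 ∂G
      = w * (CovG a + μS a * μyS) := by
    intro a; rw [hintT, hQ0XY a]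
  -- the key pointwise identification on [0, 1)
  have keyeq : ∀ ε : ℝ, 0 ≤ ε → ε < 1 →
      (fun ε : ℝ =>
        let Gε : Measure (ℝ × (Fin p → ℝ)) :=
          ENNReal.ofReal (1 - ε) • G + ENNReal.ofReal ε • Measure.dirac (y₀, x₀)
        let Qε := Gε[|Prod.fst ⁻¹' S]
        let mX : Fin p → ℝ := fun i => ∫ z, z.2 i ∂Qε
        let mY : ℝ := ∫ z, z.1 ∂Qε
        let V : Matrix (Fin p) (Fin p) ℝ :=
          Matrix.of fun i j => ∫ z, (z.2 i - mX i) * (z.2 j - mX j) ∂Qε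
        let C : Fin p → ℝ := fun i => ∫ z, (z.2 i - mX i) * (z.1 - mY) ∂Qε
        (V⁻¹ *ᵥ C) i) ε
      = ((Matrix.of fun a b =>
            ((1 - ε) * (w * (SigS a b + μS a * μS b)) + ε * (χ * (x₀ a * x₀ b)))
              / ((1 - ε) * w + ε * χ)
            - (((1 - ε) * (w * μS a) + ε * (χ * x₀ a)) * ((1 - ε) * (w * μS b) + ε * (χ * x₀ b)))
              / (((1 - ε) * w + ε * χ) * ((1 - ε) * w + ε * χ)))⁻¹
        *ᵥ fun b =>
            ((1 - ε) * (w * (CovG b + μS b * μyS)) + ε * (χ * (x₀ b * y₀)))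
              / ((1 - ε) * w + ε * χ)
            - (((1 - ε) * (w * μS b) + ε * (χ * x₀ b)) * ((1 - ε) * (w * μyS) + ε * (χ * y₀)))
              / (((1 - ε) * w + ε * χ) * ((1 - ε) * w + ε * χ))) i := by
    intro ε hε0 hε1
    simp only []
    set Qε := ((ENNReal.ofReal (1 - ε) • G + ENNReal.ofReal ε • Measure.dirac (y₀, x₀))[|Prod.fst ⁻¹' S]) with hQε
    haveI hQεP : IsProbabilityMeasure Qε :=
      cond_isProbabilityMeasure_of_finite
        (contam_T_ne_zero G (y₀, x₀) hε1 hGT0) (contam_T_ne_top G hTm (y₀, x₀) ε)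
    have hci : ∀ {f : ℝ × (Fin p → ℝ) → ℝ}, Integrable f G → Integrable f Qε := by
      intro f hf
      rw [hQε, ProbabilityTheory.cond, Measure.restrict_add, Measure.restrict_smul,
        Measure.restrict_smul, MeasureTheory.restrict_dirac' hTm]
      refine Integrable.smul_measure ?_
        (ENNReal.inv_ne_top.2 (contam_T_ne_zero G (y₀, x₀) hε1 hGT0))
      refine Integrable.add_measure ((hf.restrict).smul_measure ENNReal.ofReal_ne_top) ?_
      split_ifs
      · exact (intg_dirac f _).smul_measure ENNReal.ofReal_ne_top
      · rw [smul_zero]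
        exact integrable_zero_measure
    have keyint : ∀ f : ℝ × (Fin p → ℝ) → ℝ, Integrable f G →
        (∫ z, f z ∂Qε)
          = ((1 - ε) * (∫ z in Prod.fst ⁻¹' S, f z ∂G) + ε * (χ * f (y₀, x₀)))
            / ((1 - ε) * w + ε * χ) := by
      intro f hf
      rw [hQε, cond_contam_integral G hTm (y₀, x₀) hε0 hε1 f hf, ← hw]
      by_cases hy : y₀ ∈ S
      · have hmem : (y₀, x₀) ∈ (Prod.fst ⁻¹' S : Set (ℝ × (Fin p → ℝ))) := hy
        rw [if_pos hmem, if_pos hmem, hχ, if_pos hy]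
        ring_nf
      · have hmem : (y₀, x₀) ∉ (Prod.fst ⁻¹' S : Set (ℝ × (Fin p → ℝ))) := hy
        rw [if_neg hmem, if_neg hmem, hχ, if_neg hy]
        ring_nf
    -- moments under Qε
    have hmXf : ∀ a, (∫ z, z.2 a ∂Qε)
        = ((1 - ε) * (w * μS a) + ε * (χ * x₀ a)) / ((1 - ε) * w + ε * χ) := by
      intro a
      have h := keyint (fun z => z.2 a) (hIx a)
      simp only [] at h
      rw [hmomX a] at h
      exact h
    have hmYf : (∫ z, z.1 ∂Qε)
        = ((1 - ε) * (w * μyS) + ε * (χ * y₀)) / ((1 - ε) * w + ε * χ) := by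
      have h := keyint (fun z => z.1) hIy
      simp only [] at h
      rw [hmomY] at h
      exact h
    have hIPf : ∀ a b, (∫ z, z.2 a * z.2 b ∂Qε)
        = ((1 - ε) * (w * (SigS a b + μS a * μS b)) + ε * (χ * (x₀ a * x₀ b)))
          / ((1 - ε) * w + ε * χ) := by
      intro a b
      have h := keyint (fun z => z.2 a * z.2 b) (hIxx a b)
      simp only [] at h
      rw [hmomXX a b] at h
      exact h
    have hIRf : ∀ a, (∫ z, z.2 a * z.1 ∂Qε)
        = ((1 - ε) * (w * (CovG a + μS a * μyS)) + ε * (χ * (x₀ a * y₀)))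
          / ((1 - ε) * w + ε * χ) := by
      intro a
      have h := keyint (fun z => z.2 a * z.1) (hIxy a)
      simp only [] at h
      rw [hmomXY a] at h
      exact h
    have hVe : ∀ a b, (∫ z, (z.2 a - ∫ z, z.2 a ∂Qε) * (z.2 b - ∫ z, z.2 b ∂Qε) ∂Qε)
        = ((1 - ε) * (w * (SigS a b + μS a * μS b)) + ε * (χ * (x₀ a * x₀ b)))
            / ((1 - ε) * w + ε * χ)
          - (((1 - ε) * (w * μS a) + ε * (χ * x₀ a)) * ((1 - ε) * (w * μS b) + ε * (χ * x₀ b)))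
            / (((1 - ε) * w + ε * χ) * ((1 - ε) * w + ε * χ)) := by
      intro a b
      have h := cov_expand Qε (hci (hIx a)) (hci (hIx b)) (hci (hIxx a b))
      simp only [] at h
      rw [h, hIPf a b, hmXf a, hmXf b, div_mul_div_comm]
    have hCe : ∀ a, (∫ z, (z.2 a - ∫ z, z.2 a ∂Qε) * (z.1 - ∫ z, z.1 ∂Qε) ∂Qε)
        = ((1 - ε) * (w * (CovG a + μS a * μyS)) + ε * (χ * (x₀ a * y₀)))
            / ((1 - ε) * w + ε * χ)
          - (((1 - ε) * (w * μS a) + ε * (χ * x₀ a)) * ((1 - ε) * (w * μyS) + ε * (χ * y₀)))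
            / (((1 - ε) * w + ε * χ) * ((1 - ε) * w + ε * χ)) := by
      intro a
      have h := cov_expand Qε (hci (hIx a)) (hci hIy) (hci (hIxy a))
      simp only [] at h
      rw [h, hIRf a, hmXf a, hmYf, div_mul_div_comm]
    have hVmat : (Matrix.of fun a b =>
        ∫ z, (z.2 a - ∫ z, z.2 a ∂Qε) * (z.2 b - ∫ z, z.2 b ∂Qε) ∂Qε)
        = (Matrix.of fun a b =>
            ((1 - ε) * (w * (SigS a b + μS a * μS b)) + ε * (χ * (x₀ a * x₀ b)))
              / ((1 - ε) * w + ε * χ)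
            - (((1 - ε) * (w * μS a) + ε * (χ * x₀ a)) * ((1 - ε) * (w * μS b) + ε * (χ * x₀ b)))
              / (((1 - ε) * w + ε * χ) * ((1 - ε) * w + ε * χ))) := by
      ext a b
      simp only [Matrix.of_apply]
      exact hVe a b
    have hCvec : (fun a => ∫ z, (z.2 a - ∫ z, z.2 a ∂Qε) * (z.1 - ∫ z, z.1 ∂Qε) ∂Qε)
        = (fun b =>
            ((1 - ε) * (w * (CovG b + μS b * μyS)) + ε * (χ * (x₀ b * y₀)))
              / ((1 - ε) * w + ε * χ)
            - (((1 - ε) * (w * μS b) + ε * (χ * x₀ b)) * ((1 - ε) * (w * μyS) + ε * (χ * y₀)))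
              / (((1 - ε) * w + ε * χ) * ((1 - ε) * w + ε * χ))) := by
      funext a
      exact hCe a
    rw [hVmat, hCvec]
  -- assemble
  have hder := deriv_main w χ μyS y₀ hwne μS x₀ CovG SigS hSigSinv i
  have hind : S.indicator (fun _ => (1 : ℝ)) y₀ = χ := by
    rw [hχ, Set.indicator_apply]
  rw [hind, hr₀, hbS]
  refine HasDerivWithinAt.congr_of_eventuallyEq hder.hasDerivWithinAt ?_ ?_
  · filter_upwards [Ico_mem_nhdsGE_of_mem (Set.left_mem_Ico.mpr one_pos)] with ε hε
    exact keyeq ε hε.1 hε.2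
  · exact keyeq 0 le_rfl one_pos
end

section
/- Let G be a Borel probability measure on ℝ × ℝ^p with finite second moments, w₀ = (y₀, x₀) ∈ ℝ × ℝ^p, and G_ε = (1 − ε)G + ε δ_{w₀} for ε ∈ [0, 1). Let S₁, …, S_H be disjoint Borel subsets of ℝ with w_h = G(S_h × ℝ^p) > 0, and suppose y₀ ∈ S_{h₀} for exactly one index h₀. For each h assume Σ_h = Var_G(X | Y ∈ S_h) is invertible and set b_h = Σ_h⁻¹ Cov_G(X, Y | Y ∈ S_h), μ_h the conditional mean of X and μ_{y,h} the conditional mean of Y given {Y ∈ S_h} under G. Then the map ε ↦ Σ_{h=1}^{H} w_h b_h(ε) b_h(ε)ᵀ, where b_h(ε) = [Var_{G_ε}(X | Y ∈ S_h)]⁻¹ Cov_{G_ε}(X, Y | Y ∈ S_h), is right-differentiable at ε = 0 with derivative r₀ [ Σ_{h₀}⁻¹ (x₀ − μ_{h₀}) b_{h₀}ᵀ + b_{h₀} (x₀ − μ_{h₀})ᵀ Σ_{h₀}⁻¹ ], where r₀ = y₀ − μ_{y,h₀} − b_{h₀}ᵀ(x₀ − μ_{h₀}). -/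
open MeasureTheory ProbabilityTheory Matrix

section Aux
variable {α : Type*} [MeasurableSpace α]

lemma aux_mul_integrable {μ : Measure α} {f g : α → ℝ}
    (hf : MemLp f 2 μ) (hg : MemLp g 2 μ) : Integrable (fun x => f x * g x) μ := by
  have h : (fun x => f x * g x) = fun x => ((f x + g x)^2 - f x^2 - g x^2)/2 := by
    funext x; ring
  rw [h]
  exact (((hf.add hg).integrable_sq.sub hf.integrable_sq).sub hg.integrable_sq).div_const 2

lemma aux_center (μ : Measure α) [IsProbabilityMeasure μ] {f g : α → ℝ}
    (hf : MemLp f 2 μ) (hg : MemLp g 2 μ) (a c : ℝ) :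
    ∫ z, (f z - a) * (g z - c) ∂μ
      = (∫ z, (f z - ∫ x, f x ∂μ) * (g z - ∫ x, g x ∂μ) ∂μ)
        + ((∫ x, f x ∂μ) - a) * ((∫ x, g x ∂μ) - c) := by
  set mf := ∫ x, f x ∂μ with hmf
  set mg := ∫ x, g x ∂μ with hmg
  have hf' : MemLp (fun z => f z - mf) 2 μ := hf.sub (memLp_const mf)
  have hg' : MemLp (fun z => g z - mg) 2 μ := hg.sub (memLp_const mg)
  have h00 : Integrable (fun z => (f z - mf) * (g z - mg)) μ := aux_mul_integrable hf' hg'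
  have hif : Integrable (fun z => f z - mf) μ := hf'.integrable one_le_two
  have hig : Integrable (fun z => g z - mg) μ := hg'.integrable one_le_two
  have key : ∀ z, (f z - a) * (g z - c)
      = (f z - mf) * (g z - mg) + (mg - c) * (f z - mf)
        + ((mf - a) * (g z - mg) + (mf - a) * (mg - c)) := fun z => by ring
  have hf0 : ∫ z, (f z - mf) ∂μ = 0 := by
    rw [integral_sub (hf.integrable one_le_two) (integrable_const _), integral_const]
    simp [hmf]
  have hg0 : ∫ z, (g z - mg) ∂μ = 0 := by
    rw [integral_sub (hg.integrable one_le_two) (integrable_const _), integral_const]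
    simp [hmg]
  have i1 : Integrable (fun z => (f z - mf) * (g z - mg) + (mg - c) * (f z - mf)) μ := by
    exact h00.add (hif.const_mul _)
  have i2 : Integrable (fun z => (mf - a) * (g z - mg) + (mf - a) * (mg - c)) μ := by
    exact (hig.const_mul _).add (integrable_const _)
  have i3 : Integrable (fun z => (mg - c) * (f z - mf)) μ := hif.const_mul _
  have i4 : Integrable (fun z => (mf - a) * (g z - mg)) μ := hig.const_mul _
  simp_rw [key]
  rw [integral_add i1 i2, integral_add h00 i3, integral_add i4 (integrable_const _),
      integral_const_mul, integral_const_mul, integral_const, hf0, hg0]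
  simp

end Aux

section MatrixAux
variable {n : Type*} [Fintype n] {R : Type*} [CommRing R]

lemma aux_vecMulVec_mulVec (a c v : n → R) : vecMulVec a c *ᵥ v = (c ⬝ᵥ v) • a := by
  funext i
  simp [Matrix.mulVec, Matrix.vecMulVec, dotProduct, Finset.mul_sum, mul_assoc,
    mul_comm, mul_left_comm]

lemma aux_vecMulVec_mul (a c : n → R) (M : Matrix n n R) :
    vecMulVec a c * M = vecMulVec a (c ᵥ* M) := by
  ext i j
  simp [Matrix.mul_apply, Matrix.vecMulVec, Matrix.vecMul, dotProduct, Finset.mul_sum,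
    mul_assoc]

lemma aux_vecMulVec_mul_vecMulVec (a c e f : n → R) :
    vecMulVec a c * vecMulVec e f = (c ⬝ᵥ e) • vecMulVec a f := by
  ext i j
  simp [Matrix.mul_apply, Matrix.vecMulVec, dotProduct, Finset.sum_mul, Finset.mul_sum,
    mul_assoc, mul_comm, mul_left_comm]

end MatrixAux

section Mix

variable {α : Type*} [MeasurableSpace α] [MeasurableSingletonClass α]

lemma aux_cond_integral (μ : Measure α) {s : Set α} {wr : ℝ} (hwr : 0 < wr)
    (hws : μ s = ENNReal.ofReal wr) (f : α → ℝ) :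
    ∫ z, f z ∂(μ[|s]) = wr⁻¹ * ∫ z, f z ∂(μ.restrict s) := by
  show ∫ z, f z ∂((μ s)⁻¹ • μ.restrict s) = _
  rw [integral_smul_measure, hws, ← ENNReal.ofReal_inv_of_pos hwr,
    ENNReal.toReal_ofReal (by positivity), smul_eq_mul]

lemma aux_mix (μ : Measure α) {s : Set α} (hs : MeasurableSet s) {a : α} (ha : a ∈ s)
    {ε wr : ℝ} (hε : 0 ≤ ε) (hε1 : ε < 1) (hwr : 0 < wr) (hws : μ s = ENNReal.ofReal wr)
    {f : α → ℝ} (hf : StronglyMeasurable f) (hfi : Integrable f (μ.restrict s)) :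
    ∫ z, f z ∂((ENNReal.ofReal (1 - ε) • μ + ENNReal.ofReal ε • Measure.dirac a)[|s])
      = (1 - ε / ((1-ε)*wr + ε)) * ∫ z, f z ∂(μ[|s]) + (ε / ((1-ε)*wr + ε)) * f a := by
  classical
  have h1ε : 0 < 1 - ε := by linarith
  have hg : 0 < (1-ε)*wr + ε := by
    have := mul_pos h1ε hwr; linarith
  have hres : (Measure.dirac a).restrict s = Measure.dirac a := by
    rw [MeasureTheory.restrict_dirac' hs, if_pos ha]
  have hms : (ENNReal.ofReal (1 - ε) • μ + ENNReal.ofReal ε • Measure.dirac a) s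
      = ENNReal.ofReal ((1-ε)*wr + ε) := by
    rw [Measure.add_apply, Measure.smul_apply, Measure.smul_apply, hws,
      Measure.dirac_apply_of_mem ha, smul_eq_mul, smul_eq_mul, mul_one,
      ← ENNReal.ofReal_mul h1ε.le, ← ENNReal.ofReal_add (by positivity) hε]
  have hdint : Integrable f (Measure.dirac a) := by
    have hev : f =ᵐ[Measure.dirac a] fun _ => f a := by
      rw [Filter.EventuallyEq, MeasureTheory.ae_dirac_eq]
      exact Filter.eventually_pure.2 rfl
    exact (integrable_const (f a)).congr hev.symm
  have hi1 : Integrable f (ENNReal.ofReal (1 - ε) • μ.restrict s) :=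
    hfi.smul_measure ENNReal.ofReal_ne_top
  have hi2 : Integrable f (ENNReal.ofReal ε • Measure.dirac a) :=
    hdint.smul_measure ENNReal.ofReal_ne_top
  show ∫ z, f z
      ∂(((ENNReal.ofReal (1 - ε) • μ + ENNReal.ofReal ε • Measure.dirac a) s)⁻¹ •
        (ENNReal.ofReal (1 - ε) • μ + ENNReal.ofReal ε • Measure.dirac a).restrict s) = _
  rw [hms, Measure.restrict_add, Measure.restrict_smul, Measure.restrict_smul, hres,
    integral_smul_measure, integral_add_measure hi1 hi2, integral_smul_measure,
    integral_smul_measure, integral_dirac' f a hf,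
    aux_cond_integral μ hwr hws f, ← ENNReal.ofReal_inv_of_pos hg,
    ENNReal.toReal_ofReal (by positivity), ENNReal.toReal_ofReal h1ε.le,
    ENNReal.toReal_ofReal hε]
  have h1 : (1 - ε / ((1-ε)*wr + ε)) = (1-ε)*wr / ((1-ε)*wr + ε) := by
    field_simp
    ring
  rw [h1]
  have hw0 : wr ≠ 0 := hwr.ne'
  simp only [smul_eq_mul]
  field_simp
end Mix

section LinAlg
variable {n : Type*} [Fintype n] [DecidableEq n]

lemma aux_linalg (Sg : Matrix n n ℝ) (hSg : IsUnit Sg.det) (d C₀ : n → ℝ) (tt sε ry : ℝ)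
    (htt : 1 - tt ≠ 0) (h1q : 1 + tt * (d ⬝ᵥ (Sg⁻¹ *ᵥ d)) ≠ 0)
    (hsid : sε * (1 + tt * (d ⬝ᵥ (Sg⁻¹ *ᵥ d))) = tt * (ry - d ⬝ᵥ (Sg⁻¹ *ᵥ C₀))) :
    ((1-tt) • (Sg + tt • vecMulVec d d))⁻¹ *ᵥ ((1-tt) • (C₀ + (tt*ry) • d))
      = Sg⁻¹ *ᵥ C₀ + sε • (Sg⁻¹ *ᵥ d) := by
  set A := Sg⁻¹ with hA
  set q : ℝ := d ⬝ᵥ (A *ᵥ d) with hq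
  set D := vecMulVec d d with hD
  obtain ⟨c, hcprop⟩ : ∃ c : ℝ, c * (1 + tt * q) = tt :=
    ⟨tt / (1 + tt * q), by field_simp⟩
  have hSgA : Sg * A = 1 := Matrix.mul_nonsing_inv _ hSg
  have hDAD : D * A * D = q • D := by
    rw [hD, aux_vecMulVec_mul d d A, aux_vecMulVec_mul_vecMulVec,
      ← dotProduct_mulVec, ← hq]
  have e1 : Sg * (A * D * A) = D * A := by
    rw [← Matrix.mul_assoc, ← Matrix.mul_assoc, hSgA, Matrix.one_mul]
  have e2 : D * (A * D * A) = q • (D * A) := by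
    rw [← Matrix.mul_assoc, ← Matrix.mul_assoc, hDAD, Matrix.smul_mul]
  have hMN : (Sg + tt • D) * (A - c • (A * D * A)) = 1 := by
    rw [Matrix.add_mul, Matrix.mul_sub, Matrix.mul_sub]
    simp only [Matrix.smul_mul, Matrix.mul_smul]
    rw [hSgA, e1, e2]
    match_scalars
    · ring
    · linear_combination -hcprop
  have hMunit : IsUnit (Sg + tt • D).det := by
    have hdets : (Sg + tt • D).det * (A - c • (A * D * A)).det = 1 := by
      rw [← Matrix.det_mul, hMN, Matrix.det_one]
    exact IsUnit.of_mul_eq_one _ hdets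
  have hVunit : IsUnit ((1-tt) • (Sg + tt • D)).det := by
    rw [Matrix.det_smul]
    exact (isUnit_iff_ne_zero.2 (pow_ne_zero _ htt)).mul hMunit
  have hscal : sε + tt * (d ⬝ᵥ (A *ᵥ C₀) + sε * q) = tt * ry := by
    have h := hsid
    ring_nf at h ⊢
    linarith
  have hVx : ((1-tt) • (Sg + tt • D)) *ᵥ (A *ᵥ C₀ + sε • (A *ᵥ d))
      = (1-tt) • (C₀ + (tt*ry) • d) := by
    rw [Matrix.smul_mulVec]
    congr 1
    have hb0 : Sg *ᵥ (A *ᵥ C₀) = C₀ := by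
      rw [Matrix.mulVec_mulVec, hSgA, Matrix.one_mulVec]
    have hu0 : Sg *ᵥ (A *ᵥ d) = d := by
      rw [Matrix.mulVec_mulVec, hSgA, Matrix.one_mulVec]
    rw [Matrix.add_mulVec, Matrix.smul_mulVec, hD, aux_vecMulVec_mulVec,
      Matrix.mulVec_add, Matrix.mulVec_smul, hb0, hu0]
    have hdot : d ⬝ᵥ (A *ᵥ C₀ + sε • (A *ᵥ d)) = d ⬝ᵥ (A *ᵥ C₀) + sε * q := by
      rw [dotProduct_add, dotProduct_smul, smul_eq_mul, hq]
    rw [hdot]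
    match_scalars
    · ring
    · linear_combination hscal
  calc ((1-tt) • (Sg + tt • D))⁻¹ *ᵥ ((1-tt) • (C₀ + (tt*ry) • d))
      = ((1-tt) • (Sg + tt • D))⁻¹ *ᵥ (((1-tt) • (Sg + tt • D)) *ᵥ (A *ᵥ C₀ + sε • (A *ᵥ d))) := by
        rw [hVx]
    _ = A *ᵥ C₀ + sε • (A *ᵥ d) := by
        rw [Matrix.mulVec_mulVec, Matrix.nonsing_inv_mul _ hVunit, Matrix.one_mulVec]

end LinAlg

section CondOther
variable {α : Type*} [MeasurableSpace α] [MeasurableSingletonClass α]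

lemma aux_cond_other (μ : Measure α) {s : Set α} (hs : MeasurableSet s) {a : α} (ha : a ∉ s)
    {ε : ℝ} (hε1 : ε < 1) :
    (ENNReal.ofReal (1 - ε) • μ + ENNReal.ofReal ε • Measure.dirac a)[|s] = μ[|s] := by
  classical
  have hne : ENNReal.ofReal (1-ε) ≠ 0 := by
    simp only [ne_eq, ENNReal.ofReal_eq_zero, not_le]; linarith
  show ((ENNReal.ofReal (1 - ε) • μ + ENNReal.ofReal ε • Measure.dirac a) s)⁻¹ •
      (ENNReal.ofReal (1 - ε) • μ + ENNReal.ofReal ε • Measure.dirac a).restrict s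
    = (μ s)⁻¹ • μ.restrict s
  rw [Measure.restrict_add, Measure.restrict_smul, Measure.restrict_smul,
    MeasureTheory.restrict_dirac' hs, if_neg ha, smul_zero, add_zero,
    Measure.add_apply, Measure.smul_apply, Measure.smul_apply,
    Measure.dirac_apply' a hs, Set.indicator_of_notMem ha, smul_eq_mul, smul_eq_mul,
    mul_zero, add_zero,
    ENNReal.mul_inv (Or.inl hne) (Or.inl ENNReal.ofReal_ne_top), smul_smul,
    mul_comm _ ((μ s)⁻¹), mul_assoc, ENNReal.inv_mul_cancel hne ENNReal.ofReal_ne_top,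
    mul_one]

end CondOther

/-- The contaminated slice coefficient vector. -/
noncomputable def Bfun {p H : ℕ} (G : Measure (ℝ × (Fin p → ℝ))) (S : Fin H → Set ℝ)
    (y₀ : ℝ) (x₀ : Fin p → ℝ) (ε : ℝ) (h : Fin H) : Fin p → ℝ :=
  let Gε : Measure (ℝ × (Fin p → ℝ)) :=
    ENNReal.ofReal (1 - ε) • G + ENNReal.ofReal ε • Measure.dirac (y₀, x₀)
  let Qε := Gε[|Prod.fst ⁻¹' S h]
  let mX : Fin p → ℝ := fun i => ∫ z, z.2 i ∂Qε
  let mY : ℝ := ∫ z, z.1 ∂Qε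
  let V : Matrix (Fin p) (Fin p) ℝ :=
    Matrix.of fun i j => ∫ z, (z.2 i - mX i) * (z.2 j - mX j) ∂Qε
  let C : Fin p → ℝ := fun i => ∫ z, (z.2 i - mX i) * (z.1 - mY) ∂Qε
  V⁻¹ *ᵥ C

/-- the fixed-slice influence function of the SWAR matrix: under
`ε`-contamination `G_ε = (1−ε)G + ε δ_{(y₀,x₀)}` with `y₀` in the (unique) slice
`S_{h₀}`, the map `ε ↦ Σ_h w_h b_h(ε) b_h(ε)ᵀ` is right-differentiable at `0` with
derivative `r₀ [Σ_{h₀}⁻¹(x₀ − μ_{h₀}) b_{h₀}ᵀ + b_{h₀} (x₀ − μ_{h₀})ᵀ Σ_{h₀}⁻¹]`,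
where `r₀ = y₀ − μ_{y,h₀} − b_{h₀}ᵀ(x₀ − μ_{h₀})`. -/
theorem stmt_19 {p H : ℕ} (G : Measure (ℝ × (Fin p → ℝ))) [IsProbabilityMeasure G]
    (hG2y : MemLp (fun z : ℝ × (Fin p → ℝ) => z.1) 2 G)
    (hG2x : ∀ i, MemLp (fun z : ℝ × (Fin p → ℝ) => z.2 i) 2 G)
    (y₀ : ℝ) (x₀ : Fin p → ℝ)
    (S : Fin H → Set ℝ) (hS : ∀ h, MeasurableSet (S h))
    (hdisj : Pairwise (Function.onFun Disjoint S))
    (w : Fin H → ℝ) (hw : ∀ h, w h = (G (Prod.fst ⁻¹' S h)).toReal) (hwpos : ∀ h, 0 < w h)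
    (h₀ : Fin H) (hy₀ : y₀ ∈ S h₀)
    (μh : Fin H → Fin p → ℝ)
    (hμh : ∀ h i, μh h i = ∫ z, z.2 i ∂(G[|Prod.fst ⁻¹' S h]))
    (μyh : Fin H → ℝ) (hμyh : ∀ h, μyh h = ∫ z, z.1 ∂(G[|Prod.fst ⁻¹' S h]))
    (Sigh : Fin H → Matrix (Fin p) (Fin p) ℝ)
    (hSigh : ∀ h i j,
      Sigh h i j = ∫ z, (z.2 i - μh h i) * (z.2 j - μh h j) ∂(G[|Prod.fst ⁻¹' S h]))
    (hSighInv : ∀ h, IsUnit (Sigh h).det)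
    (Covh : Fin H → Fin p → ℝ)
    (hCovh : ∀ h i,
      Covh h i = ∫ z, (z.2 i - μh h i) * (z.1 - μyh h) ∂(G[|Prod.fst ⁻¹' S h]))
    (b : Fin H → Fin p → ℝ) (hb : ∀ h, b h = (Sigh h)⁻¹ *ᵥ Covh h)
    (r₀ : ℝ) (hr₀ : r₀ = y₀ - μyh h₀ - b h₀ ⬝ᵥ (x₀ - μh h₀)) :
    ∀ i j, HasDerivWithinAt
      (fun ε : ℝ =>
        let Gε : Measure (ℝ × (Fin p → ℝ)) :=
          ENNReal.ofReal (1 - ε) • G + ENNReal.ofReal ε • Measure.dirac (y₀, x₀)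
        let bε : Fin H → Fin p → ℝ := fun h =>
          let Qε := Gε[|Prod.fst ⁻¹' S h]
          let mX : Fin p → ℝ := fun i => ∫ z, z.2 i ∂Qε
          let mY : ℝ := ∫ z, z.1 ∂Qε
          let V : Matrix (Fin p) (Fin p) ℝ :=
            Matrix.of fun i j => ∫ z, (z.2 i - mX i) * (z.2 j - mX j) ∂Qε
          let C : Fin p → ℝ := fun i => ∫ z, (z.2 i - mX i) * (z.1 - mY) ∂Qε
          V⁻¹ *ᵥ C
        (∑ h, w h • vecMulVec (bε h) (bε h)) i j)
      ((r₀ • (vecMulVec ((Sigh h₀)⁻¹ *ᵥ (x₀ - μh h₀)) (b h₀) +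
          vecMulVec (b h₀) ((x₀ - μh h₀) ᵥ* (Sigh h₀)⁻¹))) i j)
      (Set.Ici 0) 0 := by
  intro i j
  classical
  -- basic abbreviations
  set d : Fin p → ℝ := x₀ - μh h₀ with hd
  set u : Fin p → ℝ := (Sigh h₀)⁻¹ *ᵥ d with hu
  set q : ℝ := d ⬝ᵥ u with hqdef
  set sfun : ℝ → ℝ := fun ε => ε * r₀ / (w h₀ + ε * (1 + q - w h₀)) with hsfun
  set δ : ℝ := min (1/2 : ℝ) (w h₀ / (8 * (|q| + 1))) with hδ
  have hδpos : 0 < δ := by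
    apply lt_min (by norm_num)
    exact div_pos (hwpos h₀) (by positivity)
  have hwne : w h₀ ≠ 0 := (hwpos h₀).ne'
  -- the model function
  set φ : ℝ → ℝ := fun ε =>
    w h₀ * ((b h₀ i + sfun ε * u i) * (b h₀ j + sfun ε * u j))
      + ∑ h ∈ Finset.univ.erase h₀, w h * (b h i * b h j) with hφdef
  -- derivative of the model
  have hsder : HasDerivAt sfun (r₀ / w h₀) 0 := by
    have h1 : HasDerivAt (fun ε : ℝ => ε * r₀) r₀ 0 := by
      simpa using (hasDerivAt_id (0:ℝ)).mul_const r₀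
    have h2 : HasDerivAt (fun ε : ℝ => w h₀ + ε * (1 + q - w h₀)) (1 + q - w h₀) 0 := by
      simpa using ((hasDerivAt_id (0:ℝ)).mul_const (1 + q - w h₀)).const_add (w h₀)
    have h3 := h1.div h2 (by simpa using hwne)
    refine h3.congr_deriv ?_
    field_simp
    try ring
    field_simp
  have hφder : HasDerivAt φ (r₀ * (u i * b h₀ j + b h₀ i * u j)) 0 := by
    have hf1 : HasDerivAt (fun ε => b h₀ i + sfun ε * u i) (r₀ / w h₀ * u i) 0 :=
      (hsder.mul_const (u i)).const_add _
    have hf2 : HasDerivAt (fun ε => b h₀ j + sfun ε * u j) (r₀ / w h₀ * u j) 0 :=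
      (hsder.mul_const (u j)).const_add _
    have hmul := ((hf1.mul hf2).const_mul (w h₀)).add_const
      (∑ h ∈ Finset.univ.erase h₀, w h * (b h i * b h j))
    refine hmul.congr_deriv ?_
    have hs0 : sfun 0 = 0 := by simp [hsfun]
    rw [hs0]
    field_simp
    try ring
  -- the target derivative value
  have hSsym : (Sigh h₀)ᵀ = Sigh h₀ := by
    ext a bb
    rw [Matrix.transpose_apply, hSigh, hSigh]
    simp_rw [mul_comm]
  have hvm : d ᵥ* (Sigh h₀)⁻¹ = u := by
    rw [← Matrix.mulVec_transpose, Matrix.transpose_nonsing_inv, hSsym, hu]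
  have htv : ((r₀ • (vecMulVec u (b h₀) + vecMulVec (b h₀) (d ᵥ* (Sigh h₀)⁻¹))) i j)
      = r₀ * (u i * b h₀ j + b h₀ i * u j) := by
    rw [hvm]
    simp only [Matrix.smul_apply, Matrix.add_apply, Matrix.vecMulVec_apply, smul_eq_mul]
    try ring
  -- key pointwise identity near 0
  have key : ∀ ε : ℝ, 0 ≤ ε → ε < δ →
      (∑ h, w h • vecMulVec (Bfun G S y₀ x₀ ε h) (Bfun G S y₀ x₀ ε h)) i j = φ ε := by
    intro ε hε0 hεδ
    have hεhalf : ε ≤ 1/2 := le_of_lt (lt_of_lt_of_le hεδ (min_le_left _ _))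
    have hε1 : ε < 1 := by linarith
    have hεq : ε * (|q| + 1) < w h₀ / 8 := by
      have h8 : (0:ℝ) < 8 * (|q| + 1) := by positivity
      have h9 : ε < w h₀ / (8 * (|q| + 1)) := lt_of_lt_of_le hεδ (min_le_right _ _)
      rw [lt_div_iff₀ h8] at h9
      nlinarith
    have hGs : ∀ h : Fin H, G (Prod.fst ⁻¹' S h) = ENNReal.ofReal (w h) := fun h => by
      rw [hw h, ENNReal.ofReal_toReal (measure_ne_top _ _)]
    -- slices other than h₀ are unaffected
    have hA : ∀ h : Fin H, h ≠ h₀ → Bfun G S y₀ x₀ ε h = b h := by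
      intro h hne
      have hy : (y₀, x₀) ∉ Prod.fst ⁻¹' S h := fun hmem =>
        Set.disjoint_left.mp (hdisj hne) hmem hy₀
      simp only [Bfun]
      rw [aux_cond_other G ((hS h).preimage measurable_fst) hy hε1]
      simp_rw [← hμh, ← hμyh, ← hSigh, ← hCovh]
      rw [hb h]
      rfl
    -- the h₀ slice
    have hgpos : 0 < (1-ε) * w h₀ + ε := by nlinarith [hwpos h₀]
    set tt : ℝ := ε / ((1-ε) * w h₀ + ε) with httdef
    have htt0 : 0 ≤ tt := div_nonneg hε0 hgpos.le
    have htt1 : tt < 1 := by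
      rw [httdef, div_lt_one hgpos]
      nlinarith [hwpos h₀]
    have h1t : (1:ℝ) - tt ≠ 0 := by linarith
    have hg2pos : 0 < (1-ε) * w h₀ + ε + ε * q := by
      nlinarith [hwpos h₀, neg_abs_le q, mul_nonneg hε0 (abs_nonneg q)]
    have h1qval : 1 + tt * q = ((1-ε) * w h₀ + ε + ε * q) / ((1-ε) * w h₀ + ε) := by
      rw [httdef]
      field_simp
    have h1qpos : 0 < 1 + tt * q := by
      rw [h1qval]
      positivity
    have h1q : 1 + tt * q ≠ 0 := h1qpos.ne'
    have hdenom : w h₀ + ε * (1 + q - w h₀) = (1-ε) * w h₀ + ε + ε * q := by ring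
    have hsid : sfun ε * (1 + tt * q) = tt * r₀ := by
      rw [hsfun]
      simp only []
      rw [hdenom, h1qval, httdef]
      field_simp
      try ring
    have hs₀meas : MeasurableSet (Prod.fst ⁻¹' S h₀ : Set (ℝ × (Fin p → ℝ))) :=
      (hS h₀).preimage measurable_fst
    have hGs0ne : G (Prod.fst ⁻¹' S h₀) ≠ 0 := by
      rw [hGs h₀]
      simp only [ne_eq, ENNReal.ofReal_eq_zero, not_le]
      exact hwpos h₀
    haveI hQprob : IsProbabilityMeasure (G[|Prod.fst ⁻¹' S h₀]) :=
      cond_isProbabilityMeasure hGs0ne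
    have hsmX : ∀ k, StronglyMeasurable (fun z : ℝ × (Fin p → ℝ) => z.2 k) := fun k =>
      ((measurable_pi_apply k).comp measurable_snd).stronglyMeasurable
    have hsmY : StronglyMeasurable (fun z : ℝ × (Fin p → ℝ) => z.1) :=
      measurable_fst.stronglyMeasurable
    have hR2x : ∀ k, MemLp (fun z : ℝ × (Fin p → ℝ) => z.2 k) 2
        (G.restrict (Prod.fst ⁻¹' S h₀)) := fun k => (hG2x k).restrict _
    have hR2y : MemLp (fun z : ℝ × (Fin p → ℝ) => z.1) 2
        (G.restrict (Prod.fst ⁻¹' S h₀)) := hG2y.restrict _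
    have hQ2x : ∀ k, MemLp (fun z : ℝ × (Fin p → ℝ) => z.2 k) 2 (G[|Prod.fst ⁻¹' S h₀]) :=
      fun k => (hR2x k).smul_measure (ENNReal.inv_ne_top.2 hGs0ne)
    have hQ2y : MemLp (fun z : ℝ × (Fin p → ℝ) => z.1) 2 (G[|Prod.fst ⁻¹' S h₀]) :=
      hR2y.smul_measure (ENNReal.inv_ne_top.2 hGs0ne)
    have mix : ∀ f : ℝ × (Fin p → ℝ) → ℝ, StronglyMeasurable f →
        Integrable f (G.restrict (Prod.fst ⁻¹' S h₀)) →
        ∫ z, f z ∂((ENNReal.ofReal (1 - ε) • G +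
            ENNReal.ofReal ε • Measure.dirac (y₀, x₀))[|Prod.fst ⁻¹' S h₀])
          = (1 - tt) * ∫ z, f z ∂(G[|Prod.fst ⁻¹' S h₀]) + tt * f (y₀, x₀) :=
      fun f hf hfi => aux_mix G hs₀meas hy₀ hε0 hε1 (hwpos h₀) (hGs h₀) hf hfi
    have hdk : ∀ k, d k = x₀ k - μh h₀ k := fun k => by rw [hd]; simp
    have hxk : ∀ k, x₀ k = μh h₀ k + d k := fun k => by rw [hdk]; ring
    have hmX : ∀ k, (∫ z, z.2 k ∂((ENNReal.ofReal (1 - ε) • G +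
        ENNReal.ofReal ε • Measure.dirac (y₀, x₀))[|Prod.fst ⁻¹' S h₀]))
          = μh h₀ k + tt * d k := by
      intro k
      rw [mix _ (hsmX k) ((hR2x k).integrable one_le_two), ← hμh h₀ k, hdk k]
      ring
    have hmY : (∫ z, z.1 ∂((ENNReal.ofReal (1 - ε) • G +
        ENNReal.ofReal ε • Measure.dirac (y₀, x₀))[|Prod.fst ⁻¹' S h₀]))
          = μyh h₀ + tt * (y₀ - μyh h₀) := by
      rw [mix _ hsmY (hR2y.integrable one_le_two), ← hμyh h₀]
      ring
    have hVval : ∀ i' j', (∫ z, (z.2 i' - (μh h₀ i' + tt * d i'))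
        * (z.2 j' - (μh h₀ j' + tt * d j'))
        ∂((ENNReal.ofReal (1 - ε) • G +
          ENNReal.ofReal ε • Measure.dirac (y₀, x₀))[|Prod.fst ⁻¹' S h₀]))
          = (1 - tt) * (Sigh h₀ i' j' + tt * (d i' * d j')) := by
      intro i' j'
      rw [mix (fun z => (z.2 i' - (μh h₀ i' + tt * d i'))
            * (z.2 j' - (μh h₀ j' + tt * d j')))
          (((hsmX i').sub stronglyMeasurable_const).mul
            ((hsmX j').sub stronglyMeasurable_const))
          (aux_mul_integrable ((hR2x i').sub (memLp_const _))
            ((hR2x j').sub (memLp_const _))),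
        aux_center (G[|Prod.fst ⁻¹' S h₀]) (hQ2x i') (hQ2x j')
          (μh h₀ i' + tt * d i') (μh h₀ j' + tt * d j'),
        ← hμh h₀ i', ← hμh h₀ j', ← hSigh h₀ i' j']
      simp only [hxk]
      ring
    have hCval : ∀ i', (∫ z, (z.2 i' - (μh h₀ i' + tt * d i'))
        * (z.1 - (μyh h₀ + tt * (y₀ - μyh h₀)))
        ∂((ENNReal.ofReal (1 - ε) • G +
          ENNReal.ofReal ε • Measure.dirac (y₀, x₀))[|Prod.fst ⁻¹' S h₀]))
          = (1 - tt) * (Covh h₀ i' + (tt * (y₀ - μyh h₀)) * d i') := by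
      intro i'
      rw [mix (fun z => (z.2 i' - (μh h₀ i' + tt * d i'))
            * (z.1 - (μyh h₀ + tt * (y₀ - μyh h₀))))
          (((hsmX i').sub stronglyMeasurable_const).mul
            (hsmY.sub stronglyMeasurable_const))
          (aux_mul_integrable ((hR2x i').sub (memLp_const _))
            (hR2y.sub (memLp_const _))),
        aux_center (G[|Prod.fst ⁻¹' S h₀]) (hQ2x i') hQ2y
          (μh h₀ i' + tt * d i') (μyh h₀ + tt * (y₀ - μyh h₀)),
        ← hμh h₀ i', ← hμyh h₀, ← hCovh h₀ i']
      simp only [hxk]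
      ring
    have hB0 : Bfun G S y₀ x₀ ε h₀ = fun k => b h₀ k + sfun ε * u k := by
      simp only [Bfun]
      simp_rw [hmX, hmY, hVval, hCval]
      have hg1 : (Matrix.of fun i' j' => (1 - tt) * (Sigh h₀ i' j' + tt * (d i' * d j')))
          = (1 - tt) • (Sigh h₀ + tt • vecMulVec d d) := by
        ext i' j'
        simp only [Matrix.of_apply, Matrix.smul_apply, Matrix.add_apply,
          Matrix.vecMulVec_apply, smul_eq_mul]
        try ring
      have hg2 : (fun i' => (1 - tt) * (Covh h₀ i' + (tt * (y₀ - μyh h₀)) * d i'))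
          = (1 - tt) • (Covh h₀ + (tt * (y₀ - μyh h₀)) • d) := by
        funext i'
        simp only [Pi.smul_apply, Pi.add_apply, smul_eq_mul]
        try ring
      rw [hg1, hg2, aux_linalg (Sigh h₀) (hSighInv h₀) d (Covh h₀) tt (sfun ε)
        (y₀ - μyh h₀) h1t (by rw [← hu, ← hqdef]; exact h1q)
        (by
          rw [← hu, ← hqdef, ← hb h₀, dotProduct_comm d (b h₀), ← hr₀]
          exact hsid)]
      rw [← hb h₀, ← hu]
      funext k
      simp
    -- assemble
    rw [Matrix.sum_apply]
    simp only [Matrix.smul_apply, Matrix.vecMulVec_apply, smul_eq_mul]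
    rw [← Finset.add_sum_erase _ _ (Finset.mem_univ h₀), hφdef]
    simp only
    congr 1
    · rw [hB0]
    · exact Finset.sum_congr rfl fun h hh => by rw [hA h (Finset.ne_of_mem_erase hh)]
  rw [htv]
  have main : HasDerivWithinAt
      (fun ε => (∑ h, w h • vecMulVec (Bfun G S y₀ x₀ ε h) (Bfun G S y₀ x₀ ε h)) i j)
      (r₀ * (u i * b h₀ j + b h₀ i * u j)) (Set.Ici 0) 0 := by
    refine (hφder.hasDerivWithinAt).congr_of_eventuallyEq ?_ ?_
    · filter_upwards [Ico_mem_nhdsGE hδpos] with ε hε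
      exact key ε hε.1 hε.2
    · exact key 0 le_rfl hδpos
  exact main
end
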